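/- Let T > 0, C > 0, k ≥ 0, m > k with m ≥ 2, K > 0. Let w : (0,T)×H → ℝ satisfy w(t,x) ≥ −C(1+‖x‖^k) for all (t,x) ∈ (0,T)×H, and suppose that for every R > 0 there exists a modulus σ_R such that |w(t,x) − w(s,y)| ≤ σ_R(|t−s| + ‖x−y‖_{-1}) for all t,s ∈ (0,T) and all x,y ∈ B_R. Then the inf-convolutions w_{λ,ε,β} converge to w uniformly on sets (0,T)×B_R in the following iterated sense: for every R > 0 and every ν > 0 there exists λ₀ > 0 such that for every λ ∈ (0,λ₀) there exists ε₀ > 0 such that for every ε ∈ (0,ε₀) there exists β₀ > 0 such that for every β ∈ (0,β₀), |w_{λ,ε,β}(t,x) − w(t,x)| ≤ ν for all t ∈ (0,T) and all x ∈ H with ‖x‖ ≤ R. -/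

import Mathlib

set_option maxHeartbeats 1000000


open scoped InnerProductSpace

/-- The inf-convolution
`w_{λ,ε,β}(t,x) = inf_{(s,y)∈(0,T)×H} { w(s,y) + ‖x−y‖₋₁²/(2ε) + (t−s)²/(2β) + λ e^{2mK(T−s)}‖y‖^m }`,
where `‖z‖₋₁² = ⟨Bz,z⟩`. -/
noncomputable def infConv {H : Type*} [NormedAddCommGroup H] [InnerProductSpace ℝ H]
    (B : H →L[ℝ] H) (T m K lam ε β : ℝ) (w : ℝ → H → ℝ) (t : ℝ) (x : H) : ℝ :=
  sInf ((fun p : ℝ × H =>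
      w p.1 p.2 + ⟪B (x - p.2), x - p.2⟫_ℝ / (2 * ε) + (t - p.1) ^ 2 / (2 * β)
        + lam * Real.exp (2 * m * K * (T - p.1)) * ‖p.2‖ ^ m) ''
    (Set.Ioo 0 T ×ˢ (Set.univ : Set H)))

/-- If `w(t,x) ≥ −C(1+‖x‖^k)` with `k < m` and `w` is uniformly continuous in the
`|·| + ‖·‖₋₁` distance on bounded sets (with modulus `σ_R`, where `‖z‖₋₁ = √⟨Bz,z⟩`), then
the inf-convolutions `w_{λ,ε,β}` converge to `w` uniformly on `(0,T) × B_R` in the iterated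
sense: for every `R, ν > 0` there is `λ₀ > 0` such that for every `λ ∈ (0,λ₀)` there is
`ε₀ > 0` such that for every `ε ∈ (0,ε₀)` there is `β₀ > 0` such that for every
`β ∈ (0,β₀)`, `|w_{λ,ε,β}(t,x) − w(t,x)| ≤ ν` whenever `t ∈ (0,T)` and `‖x‖ ≤ R`. -/
theorem infConv_converges_to_w
    {H : Type*} [NormedAddCommGroup H] [InnerProductSpace ℝ H] [CompleteSpace H]
    [TopologicalSpace.SeparableSpace H]
    (B : H →L[ℝ] H) (hBsa : IsSelfAdjoint B) (hBpos : ∀ x : H, 0 ≤ ⟪B x, x⟫_ℝ)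
    (T C k m K : ℝ)
    (hT : 0 < T) (hC : 0 < C) (hk : 0 ≤ k) (hkm : k < m) (hm : 2 ≤ m) (hK : 0 < K)
    (w : ℝ → H → ℝ)
    (hgrowth : ∀ t ∈ Set.Ioo (0 : ℝ) T, ∀ x : H, -C * (1 + ‖x‖ ^ k) ≤ w t x)
    (hmod : ∀ R > (0 : ℝ), ∃ σ : ℝ → ℝ,
      (∀ r : ℝ, 0 ≤ r → 0 ≤ σ r) ∧ MonotoneOn σ (Set.Ici (0 : ℝ)) ∧ σ 0 = 0 ∧
      Filter.Tendsto σ (nhdsWithin 0 (Set.Ioi 0)) (nhds 0) ∧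
      ∀ t ∈ Set.Ioo (0 : ℝ) T, ∀ s ∈ Set.Ioo (0 : ℝ) T, ∀ x y : H, ‖x‖ < R → ‖y‖ < R →
        |w t x - w s y| ≤ σ (|t - s| + Real.sqrt ⟪B (x - y), x - y⟫_ℝ)) :
    ∀ R > (0 : ℝ), ∀ ν > (0 : ℝ), ∃ lam₀ > (0 : ℝ), ∀ lam : ℝ, 0 < lam → lam < lam₀ →
      ∃ ε₀ > (0 : ℝ), ∀ ε : ℝ, 0 < ε → ε < ε₀ →
        ∃ β₀ > (0 : ℝ), ∀ β : ℝ, 0 < β → β < β₀ →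
          ∀ t ∈ Set.Ioo (0 : ℝ) T, ∀ x : H, ‖x‖ ≤ R →
            |infConv B T m K lam ε β w t x - w t x| ≤ ν := by
  intro R hR ν hν
  -- bound on sqrt of inner product
  set nB : ℝ := Real.sqrt ‖B‖ with hnB
  have hnB0 : 0 ≤ nB := Real.sqrt_nonneg _
  have hinn : ∀ z : H, Real.sqrt ⟪B z, z⟫_ℝ ≤ nB * ‖z‖ := by
    intro z
    have h2 : ⟪B z, z⟫_ℝ ≤ ‖B z‖ * ‖z‖ := real_inner_le_norm _ _
    have h3 : ‖B z‖ ≤ ‖B‖ * ‖z‖ := B.le_opNorm z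
    have h1 : ⟪B z, z⟫_ℝ ≤ ‖B‖ * (‖z‖ * ‖z‖) := by
      nlinarith [norm_nonneg z, norm_nonneg (B z)]
    calc Real.sqrt ⟪B z, z⟫_ℝ ≤ Real.sqrt (‖B‖ * (‖z‖ * ‖z‖)) := Real.sqrt_le_sqrt h1
      _ = nB * ‖z‖ := by
          rw [Real.sqrt_mul (norm_nonneg _), Real.sqrt_mul_self (norm_nonneg z)]
  -- uniform upper bound for w on (0,T) × B_R
  obtain ⟨σ₁, hσ₁nn, hσ₁mono, hσ₁0, hσ₁tend, hσ₁⟩ := hmod (R + 1) (by linarith)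
  set Wp : ℝ := w (T / 2) 0 + σ₁ (T + nB * R) with hWpdef
  have hWle : ∀ t ∈ Set.Ioo (0 : ℝ) T, ∀ x : H, ‖x‖ ≤ R → w t x ≤ Wp := by
    intro t ht x hx
    have h0 : ‖(0 : H)‖ < R + 1 := by simp; linarith
    have hx1 : ‖x‖ < R + 1 := by linarith
    have hb := hσ₁ t ht (T / 2) ⟨by linarith [ht.1], by linarith⟩ x 0 hx1 h0
    have h2 : Real.sqrt ⟪B (x - 0), x - 0⟫_ℝ ≤ nB * R := by
      calc Real.sqrt ⟪B (x - 0), x - 0⟫_ℝ ≤ nB * ‖x - 0‖ := hinn _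
        _ ≤ nB * R := by rw [sub_zero]; exact mul_le_mul_of_nonneg_left hx hnB0
    have harg : |t - T / 2| + Real.sqrt ⟪B (x - 0), x - 0⟫_ℝ ≤ T + nB * R := by
      have h1 : |t - T / 2| ≤ T := by
        rw [abs_le]; constructor
        · linarith [ht.1]
        · linarith [ht.2]
      linarith
    have hargnn : 0 ≤ |t - T / 2| + Real.sqrt ⟪B (x - 0), x - 0⟫_ℝ :=
      add_nonneg (abs_nonneg _) (Real.sqrt_nonneg _)
    have hTnn : (0:ℝ) ≤ T + nB * R := by positivity
    have hσle : σ₁ (|t - T / 2| + Real.sqrt ⟪B (x - 0), x - 0⟫_ℝ) ≤ σ₁ (T + nB * R) :=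
      hσ₁mono hargnn hTnn harg
    have := (abs_le.mp hb).2
    rw [hWpdef]; linarith
  -- choose lam₀
  have hexT : 0 < Real.exp (2 * m * K * T) := Real.exp_pos _
  have hRm : 0 < R ^ m := Real.rpow_pos_of_pos hR m
  refine ⟨ν / (Real.exp (2 * m * K * T) * R ^ m), by positivity, ?_⟩
  intro lam hlam hlamlt
  -- choose threshold M
  set A : ℝ := 2 * C + max Wp 0 with hAdef
  have hA0 : 0 < A := by
    have := le_max_right Wp 0; rw [hAdef]; linarith
  have hmk : 0 < m - k := by linarith
  set M : ℝ := max (R + 1) (max 1 ((A / lam) ^ (1 / (m - k)))) with hMdef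
  have hM1 : 1 ≤ M := le_trans (le_max_left 1 _) (le_max_right _ _)
  have hMR : R + 1 ≤ M := le_max_left _ _
  have hM0 : 0 < M := by linarith
  have hMth : ∀ r : ℝ, M ≤ r → C * (1 + r ^ k) + Wp ≤ lam * r ^ m := by
    intro r hr
    have hr1 : 1 ≤ r := le_trans hM1 hr
    have hr0 : 0 < r := by linarith
    have hAl : 0 ≤ A / lam := le_of_lt (div_pos hA0 hlam)
    have hpow : A / lam ≤ r ^ (m - k) := by
      have h1 : (A / lam) ^ (1 / (m - k)) ≤ r :=
        le_trans (le_trans (le_max_right _ _) (le_max_right _ _)) hr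
      have h2 : ((A / lam) ^ (1 / (m - k))) ^ (m - k) ≤ r ^ (m - k) :=
        Real.rpow_le_rpow (Real.rpow_nonneg hAl _) h1 (le_of_lt hmk)
      rwa [← Real.rpow_mul hAl, one_div_mul_cancel (ne_of_gt hmk), Real.rpow_one] at h2
    have hrk1 : 1 ≤ r ^ k := Real.one_le_rpow hr1 hk
    have hrk0 : 0 < r ^ k := lt_of_lt_of_le one_pos hrk1
    have hsplit : r ^ m = r ^ (m - k) * r ^ k := by
      rw [← Real.rpow_add hr0]; ring_nf
    have hmain : A ≤ lam * r ^ (m - k) := by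
      rw [div_le_iff₀ hlam] at hpow
      linarith
    have hWA : Wp ≤ max Wp 0 := le_max_left _ _
    rw [hsplit]
    calc C * (1 + r ^ k) + Wp ≤ C * r ^ k + C * r ^ k + (max Wp 0) * r ^ k := by
          nlinarith [le_max_right Wp 0]
      _ = A * r ^ k := by rw [hAdef]; ring
      _ ≤ (lam * r ^ (m - k)) * r ^ k := mul_le_mul_of_nonneg_right hmain (le_of_lt hrk0)
      _ = lam * (r ^ (m - k) * r ^ k) := by ring
  -- second modulus on ball of radius M
  obtain ⟨σ₂, hσ₂nn, hσ₂mono, hσ₂0, hσ₂tend, hσ₂⟩ := hmod M hM0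
  -- pick δ with σ₂ small on (0, δ]
  have hev : ∀ᶠ r in nhdsWithin 0 (Set.Ioi (0:ℝ)), σ₂ r < ν := by
    have : Set.Iio ν ∈ nhds (0:ℝ) := Iio_mem_nhds hν
    exact hσ₂tend this
  obtain ⟨δ, hδ0, hδ⟩ := Metric.eventually_nhds_iff.mp (eventually_nhdsWithin_iff.mp hev)
  set δ' : ℝ := δ / 2 with hδ'def
  have hδ'0 : 0 < δ' := by rw [hδ'def]; linarith
  have hδsmall : ∀ r : ℝ, 0 ≤ r → r ≤ δ' → σ₂ r ≤ ν := by
    intro r hr0 hrδ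
    rcases eq_or_lt_of_le hr0 with h | h
    · rw [← h, hσ₂0]; linarith
    · have : dist r 0 < δ := by
        rw [Real.dist_eq, sub_zero, abs_of_pos h]; rw [hδ'def] at hrδ; linarith
      exact le_of_lt (hδ this (Set.mem_Ioi.mpr h))
  -- bound for modulus arguments
  set D : ℝ := T + nB * (R + M) with hDdef
  have hD0 : 0 ≤ D := by positivity
  set S : ℝ := σ₂ D with hSdef
  have hS0 : 0 ≤ S := hσ₂nn D hD0
  refine ⟨δ' ^ 2 / (8 * (S + 1)), by positivity, ?_⟩
  intro ε hε hεlt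
  refine ⟨δ' ^ 2 / (8 * (S + 1)), by positivity, ?_⟩
  intro β hβ hβlt
  intro t ht x hx
  -- key pointwise lower bound
  have hkey : ∀ s ∈ Set.Ioo (0:ℝ) T, ∀ y : H,
      w t x - ν ≤ w s y + ⟪B (x - y), x - y⟫_ℝ / (2 * ε) + (t - s) ^ 2 / (2 * β)
        + lam * Real.exp (2 * m * K * (T - s)) * ‖y‖ ^ m := by
    intro s hs y
    have hterm2 : 0 ≤ ⟪B (x - y), x - y⟫_ℝ / (2 * ε) :=
      div_nonneg (hBpos _) (by linarith only [hε])
    have hterm3 : 0 ≤ (t - s) ^ 2 / (2 * β) := div_nonneg (sq_nonneg _) (by linarith only [hβ])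
    have hym : (0:ℝ) ≤ ‖y‖ ^ m := Real.rpow_nonneg (norm_nonneg _) m
    have h2mK : (0:ℝ) ≤ 2 * m * K :=
      mul_nonneg (by linarith only [hm] : (0:ℝ) ≤ 2 * m) (le_of_lt hK)
    have hexp1 : 1 ≤ Real.exp (2 * m * K * (T - s)) := by
      apply Real.one_le_exp
      have h1 : (0:ℝ) ≤ T - s := by linarith only [hs.2]
      exact mul_nonneg h2mK h1
    have hlamy : lam * ‖y‖ ^ m ≤ lam * Real.exp (2 * m * K * (T - s)) * ‖y‖ ^ m := by
      have := mul_le_mul_of_nonneg_right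
        (mul_le_mul_of_nonneg_left hexp1 (le_of_lt hlam)) hym
      simpa using this
    by_cases hyM : M ≤ ‖y‖
    · have h1 := hMth ‖y‖ hyM
      have h2 := hgrowth s hs y
      have h3 := hWle t ht x hx
      linarith only [h1, h2, h3, hterm2, hterm3, hlamy, hν]
    · push_neg at hyM
      have hxM : ‖x‖ < M := by linarith only [hx, hMR]
      set d : ℝ := Real.sqrt ⟪B (x - y), x - y⟫_ℝ with hddef
      have hd0 : 0 ≤ d := Real.sqrt_nonneg _
      have hd2 : d ^ 2 = ⟪B (x - y), x - y⟫_ℝ := Real.sq_sqrt (hBpos _)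
      have hmodxy := hσ₂ t ht s hs x y hxM hyM
      have hwge : w t x - σ₂ (|t - s| + d) ≤ w s y := by
        have := (abs_le.mp hmodxy).2
        linarith only [this]
      have hdb : d ≤ nB * (R + M) := by
        calc d ≤ nB * ‖x - y‖ := hinn _
          _ ≤ nB * (R + M) := by
            apply mul_le_mul_of_nonneg_left _ hnB0
            calc ‖x - y‖ ≤ ‖x‖ + ‖y‖ := norm_sub_le _ _
              _ ≤ R + M := by linarith only [hx, hyM]
      have hts : |t - s| ≤ T := by
        rw [abs_le]; constructor
        · linarith only [ht.1, hs.2]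
        · linarith only [ht.2, hs.1]
      have hargnn : 0 ≤ |t - s| + d := add_nonneg (abs_nonneg _) hd0
      have hargD : |t - s| + d ≤ D := by rw [hDdef]; linarith only [hts, hdb]
      have hσS : σ₂ (|t - s| + d) ≤ S := hσ₂mono hargnn hD0 hargD
      by_cases hsmall : |t - s| + d ≤ δ'
      · have hσν : σ₂ (|t - s| + d) ≤ ν := hδsmall _ hargnn hsmall
        have hlamexp : (0:ℝ) ≤ lam * Real.exp (2 * m * K * (T - s)) * ‖y‖ ^ m :=
          mul_nonneg (mul_nonneg (le_of_lt hlam) (le_of_lt (Real.exp_pos _))) hym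
        linarith only [hwge, hσν, hterm2, hterm3, hlamexp]
      · push_neg at hsmall
        have hS1 : (0:ℝ) < S + 1 := by linarith only [hS0]
        have hcases : δ' / 2 < |t - s| ∨ δ' / 2 < d := by
          by_contra hcon
          push_neg at hcon
          linarith only [hcon.1, hcon.2, hsmall]
        have hlamexp : (0:ℝ) ≤ lam * Real.exp (2 * m * K * (T - s)) * ‖y‖ ^ m :=
          mul_nonneg (mul_nonneg (le_of_lt hlam)
            (le_of_lt (Real.exp_pos _))) hym
        rcases hcases with hcase | hcase
        · -- time term dominates
          have hsq : δ' ^ 2 / 4 ≤ (t - s) ^ 2 := by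
            have h1 : δ' / 2 < |t - s| := hcase
            nlinarith only [abs_nonneg (t - s), sq_abs (t - s), h1, hδ'0, mul_self_nonneg (|t - s| - δ' / 2)]
          have hdom : S + 1 ≤ (t - s) ^ 2 / (2 * β) := by
            rw [le_div_iff₀ (by linarith only [hβ] : (0:ℝ) < 2 * β)]
            have hβ' : β * (8 * (S + 1)) < δ' ^ 2 :=
              (lt_div_iff₀ (by positivity : (0:ℝ) < 8 * (S + 1))).mp hβlt
            linarith only [hβ', hsq]
          linarith only [hwge, hσS, hdom, hterm2, hlamexp, hν]
        · -- space term dominates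
          have hsq : δ' ^ 2 / 4 ≤ d ^ 2 := by
            nlinarith only [hcase, hd0, hδ'0, mul_self_nonneg (d - δ' / 2)]
          have hdom : S + 1 ≤ ⟪B (x - y), x - y⟫_ℝ / (2 * ε) := by
            rw [← hd2, le_div_iff₀ (by linarith only [hε] : (0:ℝ) < 2 * ε)]
            have hε' : ε * (8 * (S + 1)) < δ' ^ 2 :=
              (lt_div_iff₀ (by positivity : (0:ℝ) < 8 * (S + 1))).mp hεlt
            linarith only [hε', hsq]
          linarith only [hwge, hσS, hdom, hterm3, hlamexp, hν]
  -- conclude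
  set f : ℝ × H → ℝ := fun p =>
    w p.1 p.2 + ⟪B (x - p.2), x - p.2⟫_ℝ / (2 * ε) + (t - p.1) ^ 2 / (2 * β)
      + lam * Real.exp (2 * m * K * (T - p.1)) * ‖p.2‖ ^ m with hfdef
  have hmemtx : ((t, x) : ℝ × H) ∈ Set.Ioo 0 T ×ˢ (Set.univ : Set H) :=
    ⟨ht, Set.mem_univ x⟩
  have hne : (f '' (Set.Ioo 0 T ×ˢ (Set.univ : Set H))).Nonempty :=
    ⟨f (t, x), Set.mem_image_of_mem f hmemtx⟩
  have hlb : ∀ z ∈ f '' (Set.Ioo 0 T ×ˢ (Set.univ : Set H)), w t x - ν ≤ z := by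
    rintro z ⟨⟨s, y⟩, ⟨hsmem, -⟩, rfl⟩
    exact hkey s hsmem y
  have hbdd : BddBelow (f '' (Set.Ioo 0 T ×ˢ (Set.univ : Set H))) :=
    ⟨w t x - ν, fun z hz => hlb z hz⟩
  have hlower : w t x - ν ≤ infConv B T m K lam ε β w t x := by
    rw [infConv]
    exact le_csInf hne hlb
  have hupper : infConv B T m K lam ε β w t x ≤ w t x + ν := by
    have hle : infConv B T m K lam ε β w t x ≤ f (t, x) := by
      rw [infConv]
      exact csInf_le hbdd (Set.mem_image_of_mem f hmemtx)
    have hftx : f (t, x) = w t x + lam * Real.exp (2 * m * K * (T - t)) * ‖x‖ ^ m := by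
      rw [hfdef]
      simp [sub_self]
    have hbound : lam * Real.exp (2 * m * K * (T - t)) * ‖x‖ ^ m ≤ ν := by
      have he : Real.exp (2 * m * K * (T - t)) ≤ Real.exp (2 * m * K * T) := by
        apply Real.exp_le_exp.mpr
        have h2mK' : (0:ℝ) ≤ 2 * m * K :=
          mul_nonneg (by linarith only [hm] : (0:ℝ) ≤ 2 * m) (le_of_lt hK)
        have : T - t ≤ T := by linarith only [ht.1]
        exact mul_le_mul_of_nonneg_left this h2mK'
      have hxm : ‖x‖ ^ m ≤ R ^ m := Real.rpow_le_rpow (norm_nonneg _) hx (by linarith only [hk, hkm])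
      have hxm0 : (0:ℝ) ≤ ‖x‖ ^ m := Real.rpow_nonneg (norm_nonneg _) m
      have hlamle : lam ≤ ν / (Real.exp (2 * m * K * T) * R ^ m) := le_of_lt hlamlt
      have hfin : (ν / (Real.exp (2 * m * K * T) * R ^ m)) *
          Real.exp (2 * m * K * T) * R ^ m = ν := by
        field_simp
      calc lam * Real.exp (2 * m * K * (T - t)) * ‖x‖ ^ m
          ≤ (ν / (Real.exp (2 * m * K * T) * R ^ m)) *
            Real.exp (2 * m * K * T) * R ^ m := by
            apply mul_le_mul
            · exact mul_le_mul hlamle he (le_of_lt (Real.exp_pos _))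
                (le_of_lt (div_pos hν (by positivity)))
            · exact hxm
            · exact hxm0
            · positivity
        _ = ν := hfin
    rw [hftx] at hle
    linarith only [hle, hbound]
  rw [abs_le]
  constructor
  · linarith only [hlower]
  · linarith only [hupper]
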